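/- Let T > 0 and let w : [0,T] → ℝ be a convex function with w(0) = w(T) = 0 and w(t) ≤ 0 for all t ∈ [0,T]. Let m := max_{t∈[0,T]} |w(t)|. Then ∫₀^T w(t)² dt ≥ m² T / 3. -/

import Mathlib

open Set

noncomputable section

/-- for a nonpositive convex arch `w` on `[0,T]` vanishing at the endpoints,
with maximal amplitude `m = max |w|`, one has `∫₀^T w² ≥ m²T/3`. -/
theorem stmt8 (T : ℝ) (hT : 0 < T) (w : ℝ → ℝ)
    (hconv : ConvexOn ℝ (Set.Icc 0 T) w)
    (hw0 : w 0 = 0) (hwT : w T = 0)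
    (hneg : ∀ t ∈ Set.Icc (0 : ℝ) T, w t ≤ 0)
    (m : ℝ) (hm : IsGreatest ((fun t => |w t|) '' Set.Icc (0 : ℝ) T) m) :
    m ^ 2 * T / 3 ≤ ∫ t in (0:ℝ)..T, w t ^ 2 := by
  obtain ⟨⟨t₀, ht₀, hwt₀⟩, hub⟩ := hm
  have hm0 : 0 ≤ m := (abs_nonneg _).trans hwt₀.le
  have habs : ∀ t ∈ Icc (0:ℝ) T, |w t| ≤ m := fun t ht => hub ⟨t, ht, rfl⟩
  -- trivial case m = 0
  rcases eq_or_lt_of_le hm0 with hm0' | hmpos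
  · have : m ^ 2 * T / 3 = 0 := by rw [← hm0']; ring
    rw [this]
    exact intervalIntegral.integral_nonneg hT.le (fun u _ => sq_nonneg _)
  -- main case
  have hwt₀'' : |w t₀| = m := hwt₀
  have hwt₀' : w t₀ = -m := by
    have := hneg t₀ ht₀
    rw [abs_of_nonpos this] at hwt₀''
    linarith
  have ht₀pos : 0 < t₀ := by
    rcases lt_or_eq_of_le ht₀.1 with h | h
    · exact h
    · exfalso; rw [← h] at hwt₀'; rw [hw0] at hwt₀'; linarith
  have ht₀lt : t₀ < T := by
    rcases lt_or_eq_of_le ht₀.2 with h | h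
    · exact h
    · exfalso; rw [h] at hwt₀'; rw [hwT] at hwt₀'; linarith
  have hTt₀ : 0 < T - t₀ := by linarith
  have ht₀ne : t₀ ≠ 0 := ht₀pos.ne'
  have hTt₀ne : T - t₀ ≠ 0 := hTt₀.ne'
  -- pointwise lower bounds by the chords
  have key1 : ∀ t ∈ Icc (0:ℝ) t₀, (m / t₀ * t) ^ 2 ≤ w t ^ 2 := by
    intro t ht
    set s := t / t₀ with hs
    have hs0 : 0 ≤ s := div_nonneg ht.1 ht₀pos.le
    have hs1 : s ≤ 1 := (div_le_one ht₀pos).2 ht.2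
    have h0mem : (0:ℝ) ∈ Icc (0:ℝ) T := ⟨le_refl _, hT.le⟩
    have ht₀mem : t₀ ∈ Icc (0:ℝ) T := ht₀
    have hc := hconv.2 h0mem ht₀mem (by linarith : (0:ℝ) ≤ 1 - s) hs0 (by ring)
    have harg : (1 - s) • (0:ℝ) + s • t₀ = t := by
      simp only [smul_eq_mul, hs]
      field_simp
      all_goals first | (left; ring) | ring
    rw [harg, hw0, hwt₀'] at hc
    have hwle : w t ≤ -(m / t₀ * t) := by
      have : (1 - s) * 0 + s * (-m) = -(m / t₀ * t) := by
        rw [hs]; field_simp; all_goals first | (left; ring) | ring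
      linarith [hc, this.symm ▸ hc]
    have hcnn : 0 ≤ m / t₀ * t := mul_nonneg (div_nonneg hm0 ht₀pos.le) ht.1
    have := sq_le_sq' (by linarith : -(-(w t)) ≤ m / t₀ * t) (by linarith : m / t₀ * t ≤ -(w t))
    rwa [neg_sq] at this
  have key2 : ∀ t ∈ Icc t₀ T, (m / (T - t₀) * (T - t)) ^ 2 ≤ w t ^ 2 := by
    intro t ht
    set s := (t - t₀) / (T - t₀) with hs
    have hs0 : 0 ≤ s := div_nonneg (by linarith [ht.1]) hTt₀.le
    have hs1 : s ≤ 1 := (div_le_one hTt₀).2 (by linarith [ht.2])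
    have hTmem : T ∈ Icc (0:ℝ) T := ⟨hT.le, le_refl _⟩
    have hc := hconv.2 ht₀ hTmem (by linarith : (0:ℝ) ≤ 1 - s) hs0 (by ring)
    have harg : (1 - s) • t₀ + s • T = t := by
      simp only [smul_eq_mul, hs]
      field_simp
      all_goals first | (left; ring) | ring
    rw [harg, hwT, hwt₀'] at hc
    have hwle : w t ≤ -(m / (T - t₀) * (T - t)) := by
      have heq : (1 - s) * (-m) + s * 0 = -(m / (T - t₀) * (T - t)) := by
        rw [hs]; field_simp; all_goals first | (left; ring) | ring
      linarith [hc, heq ▸ hc]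
    have hcnn : 0 ≤ m / (T - t₀) * (T - t) :=
      mul_nonneg (div_nonneg hm0 hTt₀.le) (by linarith [ht.2])
    have := sq_le_sq' (by linarith : -(-(w t)) ≤ m / (T - t₀) * (T - t))
      (by linarith : m / (T - t₀) * (T - t) ≤ -(w t))
    rwa [neg_sq] at this
  -- integrability of w^2 on [0,T]
  have hcont : ContinuousOn w (Ioo 0 T) := by
    have := hconv.continuousOn_interior
    rwa [interior_Icc] at this
  have hint : IntervalIntegrable (fun t => w t ^ 2) MeasureTheory.volume 0 T := by
    rw [intervalIntegrable_iff_integrableOn_Ioc_of_le hT.le]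
    have hIoo : MeasureTheory.IntegrableOn (fun t => w t ^ 2) (Ioo 0 T)
        MeasureTheory.volume := by
      refine ⟨((hcont.pow 2).aestronglyMeasurable measurableSet_Ioo), ?_⟩
      apply MeasureTheory.HasFiniteIntegral.restrict_of_bounded (C := m ^ 2)
        measure_Ioo_lt_top
      filter_upwards [MeasureTheory.ae_restrict_mem measurableSet_Ioo] with t ht
      have h1 : |w t| ≤ m := habs t ⟨ht.1.le, ht.2.le⟩
      have : w t ^ 2 ≤ m ^ 2 := by
        rw [← sq_abs]
        exact pow_le_pow_left₀ (abs_nonneg _) h1 2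
      rw [Real.norm_eq_abs, abs_of_nonneg (sq_nonneg _)]
      exact this
    exact hIoo.congr_set_ae MeasureTheory.Ioo_ae_eq_Ioc.symm
  have hint1 : IntervalIntegrable (fun t => w t ^ 2) MeasureTheory.volume 0 t₀ := by
    apply hint.mono_set
    rw [uIcc_of_le ht₀pos.le, uIcc_of_le hT.le]
    exact Icc_subset_Icc le_rfl ht₀lt.le
  have hint2 : IntervalIntegrable (fun t => w t ^ 2) MeasureTheory.volume t₀ T := by
    apply hint.mono_set
    rw [uIcc_of_le ht₀lt.le, uIcc_of_le hT.le]
    exact Icc_subset_Icc ht₀pos.le le_rfl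
  -- split the integral
  have hsplit : (∫ t in (0:ℝ)..T, w t ^ 2)
      = (∫ t in (0:ℝ)..t₀, w t ^ 2) + ∫ t in t₀..T, w t ^ 2 :=
    (intervalIntegral.integral_add_adjacent_intervals hint1 hint2).symm
  -- bound each piece
  have hb1 : m ^ 2 * t₀ / 3 ≤ ∫ t in (0:ℝ)..t₀, w t ^ 2 := by
    have hmono := intervalIntegral.integral_mono_on ht₀pos.le
      (Continuous.intervalIntegrable (by fun_prop) 0 t₀) hint1 key1
    have hcalc : (∫ t in (0:ℝ)..t₀, (m / t₀ * t) ^ 2) = m ^ 2 * t₀ / 3 := by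
      have : (fun t : ℝ => (m / t₀ * t) ^ 2) = fun t => (m / t₀) ^ 2 * t ^ 2 := by
        funext t; ring
      rw [this, intervalIntegral.integral_const_mul, integral_pow]
      field_simp
      ring
    linarith [hcalc ▸ hmono]
  have hb2 : m ^ 2 * (T - t₀) / 3 ≤ ∫ t in t₀..T, w t ^ 2 := by
    have hmono := intervalIntegral.integral_mono_on ht₀lt.le
      (Continuous.intervalIntegrable (by fun_prop) t₀ T) hint2 key2
    have hcalc : (∫ t in t₀..T, (m / (T - t₀) * (T - t)) ^ 2)
        = m ^ 2 * (T - t₀) / 3 := by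
      have h1 : (fun t : ℝ => (m / (T - t₀) * (T - t)) ^ 2)
          = fun t => (m / (T - t₀)) ^ 2 * (T - t) ^ 2 := by
        funext t; ring
      rw [h1, intervalIntegral.integral_const_mul]
      have h2 : (∫ t in t₀..T, (T - t) ^ 2) = ∫ x in (T - T)..(T - t₀), x ^ 2 :=
        intervalIntegral.integral_comp_sub_left (fun x => x ^ 2) T
      rw [h2, integral_pow]
      field_simp
      ring
    linarith [hcalc ▸ hmono]
  rw [hsplit]
  have : m ^ 2 * T / 3 = m ^ 2 * t₀ / 3 + m ^ 2 * (T - t₀) / 3 := by ring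
  linarith
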